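/- Let L be slowly varying at infinity, β > 0, and A_{k_n} = e^{2β(n-1)} L(e^{2n-2}). Fix positive constants b₁, b₂, b₃ with b₂ > b₃, and fix x₀ > 0 with x₀ ≠ e^{2β(r+1-b₁)} for every integer r. Then there are only finitely many integers n for which there exists a positive integer m with m - b₁ + (1/(2β)) log L(e^{2m-b₂}) ≤ (1/(2β)) log(A_{k_n} x₀) < m - b₁ + (1/(2β)) log L(e^{2m-b₃}). -/

import Mathlib

open Filter Real

private lemma aux_sign {u s v : ℝ} (h1 : u ≤ s) (h2 : s < v) (hu : |u| < |s|) (hv : |v| < |s|) : False := by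
  rcases le_or_gt 0 s with hs | hs
  · have h3 : v ≤ |v| := le_abs_self v
    rw [abs_of_nonneg hs] at hv
    linarith
  · rw [abs_of_neg hs] at hu hv
    have h3 : -|u| ≤ u := neg_abs_le u
    linarith

private lemma aux_bdd (u : ℕ → ℝ) (h : Tendsto u atTop (nhds 0)) :
    ∃ C, 0 ≤ C ∧ ∀ n, |u n| ≤ C := by
  obtain ⟨N, hN⟩ := Metric.tendsto_atTop.mp h 1 one_pos
  obtain ⟨B, hB⟩ := ((Finset.range N).image (fun n => |u n|)).exists_le
  refine ⟨max B 1, le_trans zero_le_one (le_max_right _ _), fun n => ?_⟩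
  rcases lt_or_ge n N with hn | hn
  · exact le_trans (hB _ (Finset.mem_image_of_mem _ (Finset.mem_range.mpr hn))) (le_max_left _ _)
  · have h2 := hN n hn
    rw [Real.dist_eq, sub_zero] at h2
    exact le_trans h2.le (le_max_right _ _)

private lemma aux_potter (g : ℕ → ℝ) (N : ℕ) (hstep : ∀ n, N ≤ n → |g (n+1) - g n| ≤ 1/2) :
    ∃ C, 0 ≤ C ∧ ∀ m n : ℕ, |g m - g n| ≤ (1/2) * |(m:ℝ) - (n:ℝ)| + C := by
  obtain ⟨B, hB⟩ := ((Finset.range (N+1)).image (fun m => |g m - g N|)).exists_le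
  set B0 := max B 0 with hB0def
  have hB0 : ∀ m, m ≤ N → |g m - g N| ≤ B0 := fun m hm =>
    le_trans (hB _ (Finset.mem_image_of_mem _ (Finset.mem_range.mpr (Nat.lt_succ_of_le hm)))) (le_max_left _ _)
  have hB0nn : (0:ℝ) ≤ B0 := le_max_right _ _
  have step1 : ∀ n k, N ≤ n → |g (n+k) - g n| ≤ (k:ℝ) * (1/2) := by
    intro n k hn
    induction k with
    | zero => simp
    | succ k ih =>
      have hst : |g (n+k+1) - g (n+k)| ≤ 1/2 := hstep _ (le_trans hn (Nat.le_add_right _ _))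
      have htri : |g (n+(k+1)) - g n| ≤ |g (n+(k+1)) - g (n+k)| + |g (n+k) - g n| := abs_sub_le _ _ _
      push_cast
      push_cast at ih
      have : |g (n+(k+1)) - g (n+k)| = |g (n+k+1) - g (n+k)| := rfl
      rw [this] at htri
      linarith
  have step2 : ∀ p q : ℕ, N ≤ q → q ≤ p → |g p - g q| ≤ (1/2) * ((p:ℝ) - (q:ℝ)) := by
    intro p q hq hqp
    obtain ⟨k, rfl⟩ := Nat.exists_eq_add_of_le hqp
    have h1 := step1 q k hq
    push_cast
    linarith
  have main : ∀ m n : ℕ, n ≤ m → |g m - g n| ≤ (1/2)*|(m:ℝ)-(n:ℝ)| + 2*B0 := by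
    intro m n hnm
    have hmn : (n:ℝ) ≤ (m:ℝ) := by exact_mod_cast hnm
    have habs : |(m:ℝ) - (n:ℝ)| = (m:ℝ) - (n:ℝ) := abs_of_nonneg (by linarith)
    rcases le_or_gt N n with hn | hn
    · have h1 := step2 m n hn hnm
      rw [habs]; linarith
    · rcases le_or_gt N m with hm | hm
      · have h1 := step2 m N (le_refl N) hm
        have h2 := hB0 n (le_of_lt hn)
        have h3 := abs_sub_le (g m) (g N) (g n)
        have h4 : |g N - g n| = |g n - g N| := abs_sub_comm _ _
        have hcast : (n:ℝ) < (N:ℝ) := by exact_mod_cast hn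
        rw [habs]
        linarith
      · have h2 := hB0 n (le_of_lt hn)
        have h1 := hB0 m (le_of_lt hm)
        have h3 := abs_sub_le (g m) (g N) (g n)
        have h4 : |g N - g n| = |g n - g N| := abs_sub_comm _ _
        rw [habs]
        have h5 : (0:ℝ) ≤ (m:ℝ) - (n:ℝ) := by linarith
        linarith
  refine ⟨2*B0, by linarith, fun m n => ?_⟩
  rcases le_total n m with h | h
  · exact main m n h
  · rw [abs_sub_comm (g m), abs_sub_comm ((m:ℝ))]
    exact main n m h

/-- Let `L` be slowly varying, `β > 0`, `A_{k_n} = e^{2β(n-1)} L(e^{2n-2})`, and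
`b₁, b₂, b₃ > 0` with `b₂ > b₃`. For any `x₀ > 0` not of the form `e^{2β(r+1-b₁)}`, `r ∈ ℤ`,
there are only finitely many `n` for which some positive integer `m` satisfies
`m - b₁ + (1/(2β)) log L(e^{2m-b₂}) ≤ (1/(2β)) log(A_{k_n} x₀) < m - b₁ + (1/(2β)) log L(e^{2m-b₃})`. -/
theorem stmt17 (L : ℝ → ℝ) (hLpos : ∀ x, 0 < L x)
    (hL : ∀ a : ℝ, 0 < a → Filter.Tendsto (fun x => L (a * x) / L x) Filter.atTop (nhds 1))
    (β b1 b2 b3 : ℝ) (hβ : 0 < β) (hb1 : 0 < b1) (hb2 : 0 < b2) (hb3 : 0 < b3)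
    (hb23 : b3 < b2)
    (A : ℕ → ℝ)
    (hA : ∀ n : ℕ, A n = Real.exp (2 * β * ((n : ℝ) - 1)) * L (Real.exp (2 * (n : ℝ) - 2)))
    (x₀ : ℝ) (hx₀ : 0 < x₀)
    (hx₀ne : ∀ r : ℤ, x₀ ≠ Real.exp (2 * β * ((r : ℝ) + 1 - b1))) :
    {n : ℕ | ∃ m : ℕ, 0 < m ∧
      (m : ℝ) - b1 + 1 / (2 * β) * Real.log (L (Real.exp (2 * (m : ℝ) - b2)))
          ≤ 1 / (2 * β) * Real.log (A n * x₀) ∧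
      1 / (2 * β) * Real.log (A n * x₀)
          < (m : ℝ) - b1 + 1 / (2 * β) * Real.log (L (Real.exp (2 * (m : ℝ) - b3)))}.Finite := by
  have hβ' : (2*β) ≠ 0 := by positivity
  obtain ⟨t₀, ht₀⟩ : ∃ t : ℝ, t = Real.log x₀ / (2*β) := ⟨_, rfl⟩
  obtain ⟨ℓ, hℓ⟩ : ∃ f : ℝ → ℝ, ∀ u, f u = 1/(2*β) * Real.log (L (Real.exp u)) :=
    ⟨_, fun u => rfl⟩
  obtain ⟨g, hg⟩ : ∃ f : ℕ → ℝ, ∀ n : ℕ, f n = ℓ (2*(n:ℝ) - 2) := ⟨_, fun n => rfl⟩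
  -- key limit
  have key : ∀ d : ℝ, Tendsto (fun n : ℕ => ℓ (2*(n:ℝ) - d) - ℓ (2*(n:ℝ) - 2)) atTop (nhds 0) := by
    intro d
    have h0 : Tendsto (fun n : ℕ => 2*(n:ℝ) - 2) atTop atTop := by
      have h00 := Tendsto.const_mul_atTop (two_pos) (tendsto_natCast_atTop_atTop (R := ℝ))
      have h := tendsto_atTop_add_const_right atTop (-2 : ℝ) h00
      simpa [sub_eq_add_neg] using h
    have h1 : Tendsto (fun n : ℕ => Real.exp (2*(n:ℝ) - 2)) atTop atTop :=
      Real.tendsto_exp_atTop.comp h0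
    have h2 := (hL (Real.exp (2 - d)) (Real.exp_pos _)).comp h1
    have h3 : Tendsto (fun n : ℕ => L (Real.exp (2*(n:ℝ) - d)) / L (Real.exp (2*(n:ℝ) - 2))) atTop (nhds 1) := by
      have heq : (fun n : ℕ => L (Real.exp (2*(n:ℝ) - d)) / L (Real.exp (2*(n:ℝ) - 2)))
           = (fun x => L (Real.exp (2-d) * x) / L x) ∘ (fun n : ℕ => Real.exp (2*(n:ℝ) - 2)) := by
        funext n
        simp only [Function.comp_apply]
        rw [← Real.exp_add]
        ring_nf
      rw [heq]; exact h2
    have h4 := (Real.continuousAt_log one_ne_zero).tendsto.comp h3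
    rw [Real.log_one] at h4
    have h5 := h4.const_mul (1/(2*β))
    rw [mul_zero] at h5
    refine h5.congr fun n => ?_
    simp only [Function.comp_apply]
    rw [hℓ, hℓ, Real.log_div (hLpos _).ne' (hLpos _).ne']
    ring
  -- nonresonance
  have hsne : ∀ r : ℤ, (r:ℝ) + b1 + t₀ ≠ 0 := by
    intro r h
    apply hx₀ne (-r - 1)
    rw [← Real.exp_log hx₀]
    congr 1
    have hlog : Real.log x₀ = 2*β*t₀ := by rw [ht₀]; field_simp
    rw [hlog]
    push_cast
    have ht : t₀ = -(r:ℝ) - b1 := by linarith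
    rw [ht]; ring
  -- step bound
  have hstep : ∃ N, ∀ n, N ≤ n → |g (n+1) - g n| ≤ 1/2 := by
    obtain ⟨N, hN⟩ := Metric.tendsto_atTop.mp (key 0) (1/2) (by norm_num)
    refine ⟨N, fun n hn => ?_⟩
    have h2 := hN n hn
    rw [Real.dist_eq, sub_zero] at h2
    rw [hg, hg]
    have e : (2*(((n:ℕ)+1:ℕ):ℝ) - 2) = 2*(n:ℝ) - 0 := by push_cast; ring
    rw [e]
    exact h2.le
  obtain ⟨Ns, hNs⟩ := hstep
  obtain ⟨Cp, hCpnn, hCp⟩ := aux_potter g Ns hNs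
  obtain ⟨C2, hC2nn, hC2⟩ := aux_bdd _ (key b2)
  obtain ⟨C3, hC3nn, hC3⟩ := aux_bdd _ (key b3)
  set R : ℝ := 2*(C2 + C3 + Cp + 1 + b1 + |t₀|) with hR
  have hNr : ∀ r : ℤ, ∃ N : ℕ, ∀ n : ℕ, N ≤ n →
      |ℓ (2*(n:ℝ) - (2 + 2*(r:ℝ) + b2)) - ℓ (2*(n:ℝ) - 2)| < |(r:ℝ) + b1 + t₀| ∧
      |ℓ (2*(n:ℝ) - (2 + 2*(r:ℝ) + b3)) - ℓ (2*(n:ℝ) - 2)| < |(r:ℝ) + b1 + t₀| := by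
    intro r
    have hpos : 0 < |(r:ℝ) + b1 + t₀| := abs_pos.mpr (hsne r)
    obtain ⟨N1, hN1⟩ := Metric.tendsto_atTop.mp (key (2 + 2*(r:ℝ) + b2)) _ hpos
    obtain ⟨N2, hN2⟩ := Metric.tendsto_atTop.mp (key (2 + 2*(r:ℝ) + b3)) _ hpos
    refine ⟨max N1 N2, fun n hn => ⟨?_, ?_⟩⟩
    · have h2 := hN1 n (le_trans (le_max_left _ _) hn)
      rw [Real.dist_eq, sub_zero] at h2
      exact h2
    · have h2 := hN2 n (le_trans (le_max_right _ _) hn)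
      rw [Real.dist_eq, sub_zero] at h2
      exact h2
  choose f hf using hNr
  set R' : ℕ := ⌈R⌉₊ with hR'
  set N : ℕ := (Finset.Icc (-(R':ℤ)) (R':ℤ)).sup f with hNdef
  apply Set.Finite.subset (Set.finite_Iio N)
  intro n hn
  simp only [Set.mem_setOf_eq] at hn
  obtain ⟨m, hm, h1, h2⟩ := hn
  simp only [Set.mem_Iio]
  by_contra hcon
  push_neg at hcon
  obtain ⟨r, hrdef⟩ : ∃ r : ℤ, r = (n:ℤ) - (m:ℤ) - 1 := ⟨_, rfl⟩
  have hrr : (r:ℝ) = (n:ℝ) - (m:ℝ) - 1 := by rw [hrdef]; push_cast; ring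
  obtain ⟨s, hsdef⟩ : ∃ s : ℝ, s = (r:ℝ) + b1 + t₀ := ⟨_, rfl⟩
  have hc : 1/(2*β) * Real.log (A n * x₀) = ((n:ℝ) - 1) + g n + t₀ := by
    rw [hA, Real.log_mul (mul_ne_zero (Real.exp_ne_zero _) (hLpos _).ne') (ne_of_gt hx₀),
        Real.log_mul (Real.exp_ne_zero _) (hLpos _).ne', Real.log_exp, hg, hℓ, ht₀]
    field_simp
  rw [hc] at h1 h2
  have h1' : ℓ (2*(m:ℝ) - b2) - g n ≤ s := by
    rw [hℓ, hsdef, hrr]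
    linarith
  have h2' : s < ℓ (2*(m:ℝ) - b3) - g n := by
    rw [hℓ, hsdef, hrr]
    linarith
  have hgmn : |g m - g n| ≤ (1/2)*|(m:ℝ)-(n:ℝ)| + Cp := hCp m n
  have hb2m : |ℓ (2*(m:ℝ) - b2) - g m| ≤ C2 := by
    rw [hg]
    simpa using hC2 m
  have hb3m : |ℓ (2*(m:ℝ) - b3) - g m| ≤ C3 := by
    rw [hg]
    simpa using hC3 m
  have habs_mn : |(m:ℝ) - (n:ℝ)| ≤ |(r:ℝ)| + 1 := by
    have he : (m:ℝ) - (n:ℝ) = -((r:ℝ) + 1) := by rw [hrr]; ring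
    rw [he, abs_neg]
    exact (abs_add_le _ _).trans (by simp)
  have hu2 : |ℓ (2*(m:ℝ) - b2) - g n| ≤ C2 + ((1/2)*(|(r:ℝ)|+1) + Cp) := by
    have htri := abs_sub_le (ℓ (2*(m:ℝ) - b2)) (g m) (g n)
    linarith
  have hu3 : |ℓ (2*(m:ℝ) - b3) - g n| ≤ C3 + ((1/2)*(|(r:ℝ)|+1) + Cp) := by
    have htri := abs_sub_le (ℓ (2*(m:ℝ) - b3)) (g m) (g n)
    linarith
  have hsle : |s| ≤ C2 + C3 + (1/2)*(|(r:ℝ)|+1) + Cp := by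
    have l2 := abs_le.mp hu2
    have l3 := abs_le.mp hu3
    apply abs_le.mpr
    constructor
    · linarith [l2.1]
    · linarith [l3.2]
  have hrle : |(r:ℝ)| ≤ R := by
    have hsub : |(r:ℝ)| ≤ |s| + (b1 + |t₀|) := by
      have he : (r:ℝ) = s - (b1 + t₀) := by rw [hsdef]; ring
      calc |(r:ℝ)| = |s - (b1+t₀)| := by rw [← he]
        _ ≤ |s| + |b1+t₀| := abs_sub _ _
        _ ≤ |s| + (b1 + |t₀|) := by
            have h5 := abs_add_le b1 t₀
            have h6 : |b1| = b1 := abs_of_pos hb1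
            linarith
    rw [hR]
    linarith
  have hrmem : r ∈ Finset.Icc (-(R':ℤ)) (R':ℤ) := by
    have hRR' : R ≤ (R' : ℝ) := Nat.le_ceil R
    have h : |(r:ℝ)| ≤ (R':ℝ) := le_trans hrle hRR'
    rw [Finset.mem_Icc]
    have ha := abs_le.mp h
    constructor
    · exact_mod_cast ha.1
    · exact_mod_cast ha.2
  have hfr : f r ≤ N := Finset.le_sup hrmem
  obtain ⟨hlt2, hlt3⟩ := hf r n (le_trans hfr hcon)
  rw [← hsdef] at hlt2 hlt3
  have e2 : 2*(n:ℝ) - (2 + 2*(r:ℝ) + b2) = 2*(m:ℝ) - b2 := by rw [hrr]; ring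
  have e3 : 2*(n:ℝ) - (2 + 2*(r:ℝ) + b3) = 2*(m:ℝ) - b3 := by rw [hrr]; ring
  rw [e2, ← hg n] at hlt2
  rw [e3, ← hg n] at hlt3
  exact aux_sign h1' h2' hlt2 hlt3
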